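/- For each fixed positive integer t there exists N such that for all n ≥ N and all integers r with t+4 ≤ r ≤ n−2, we have t · B_{n-r+1} < B̃_{n-t-1}. -/

import Mathlib

open Finset

/-- A set partition of `Fin n`, modelled as a finite set of blocks. -/
def IsSetPartition {n : ℕ} (P : Finset (Finset (Fin n))) : Prop :=
  (∀ b ∈ P, b.Nonempty) ∧ (∀ b ∈ P, ∀ c ∈ P, b ≠ c → Disjoint b c) ∧
    P.sup id = Finset.univ

/-- The `n`-th Bell number: the number of set partitions of an `n`-element set. -/
noncomputable def bell (n : ℕ) : ℕ :=
  Set.ncard {P : Finset (Finset (Fin n)) | IsSetPartition P}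

/-- The number of singleton-free set partitions of an `n`-element set. -/
noncomputable def bellT (n : ℕ) : ℕ :=
  Set.ncard {P : Finset (Finset (Fin n)) | IsSetPartition P ∧ ∀ b ∈ P, 2 ≤ b.card}

namespace SPaux

def Pset (n : ℕ) : Set (Finset (Finset (Fin n))) := {P | IsSetPartition P}

def SFset (n : ℕ) : Set (Finset (Finset (Fin n))) :=
  {P | IsSetPartition P ∧ ∀ b ∈ P, 2 ≤ b.card}

def Tset (k : ℕ) : Set (Finset (Finset (Fin (k+1)))) :=
  {P | IsSetPartition P ∧ {Fin.last k} ∈ P}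

lemma bell_eq (n : ℕ) : bell n = (Pset n).ncard := rfl
lemma bellT_eq (n : ℕ) : bellT n = (SFset n).ncard := rfl

variable {n : ℕ}

lemma exists_block (hP : IsSetPartition (P : Finset (Finset (Fin n)))) (x : Fin n) :
    ∃ b ∈ P, x ∈ b := by
  have := hP.2.2
  have hx : x ∈ P.sup id := this ▸ Finset.mem_univ x
  simpa [Finset.mem_sup] using hx

lemma block_eq {P : Finset (Finset (Fin n))} (hP : IsSetPartition P) {b c : Finset (Fin n)}
    (hb : b ∈ P) (hc : c ∈ P) {x : Fin n} (hxb : x ∈ b) (hxc : x ∈ c) : b = c := by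
  by_contra hne
  exact (hP.2.1 b hb c hc hne).forall_ne_finset hxb hxc rfl



variable {k : ℕ}

def upF (b : Finset (Fin k)) : Finset (Fin (k+1)) := b.map Fin.castSuccEmb

lemma upF_inj : Function.Injective (upF (k := k)) := fun _ _ h => Finset.map_injective _ h

lemma card_upF (b : Finset (Fin k)) : (upF b).card = b.card := Finset.card_map _

lemma mem_upF {b : Finset (Fin k)} {y : Fin k} : y.castSucc ∈ upF b ↔ y ∈ b := by
  constructor
  · intro h
    rw [upF, Finset.mem_map] at h
    obtain ⟨z, hz, hzy⟩ := h
    have : z = y := Fin.castSucc_injective _ hzy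
    exact this ▸ hz
  · intro h; rw [upF, Finset.mem_map]; exact ⟨y, h, rfl⟩

lemma last_not_mem_upF (b : Finset (Fin k)) : Fin.last k ∉ upF b := by
  simp only [upF, Finset.mem_map]
  rintro ⟨x, -, hx⟩
  exact absurd hx (Fin.castSucc_lt_last x).ne

def up (P : Finset (Finset (Fin k))) : Finset (Finset (Fin (k+1))) :=
  insert {Fin.last k} (P.image upF)

lemma up_inj : Function.Injective (up (k := k)) := by
  have key : ∀ P : Finset (Finset (Fin k)), ({Fin.last k} : Finset (Fin (k+1))) ∉ P.image upF := by
    intro P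
    simp only [Finset.mem_image]
    rintro ⟨b, -, hb⟩
    exact last_not_mem_upF b (hb ▸ Finset.mem_singleton_self _)
  intro P Q h
  have : P.image upF = Q.image upF := by
    have := congrArg (Finset.erase · {Fin.last k}) h
    simpa [up, Finset.erase_insert, key P, key Q] using this
  exact Finset.image_injective upF_inj this

lemma up_isPartition {P : Finset (Finset (Fin k))} (hP : IsSetPartition P) :
    IsSetPartition (up P) := by
  obtain ⟨hne, hdisj, hsup⟩ := hP
  refine ⟨?_, ?_, ?_⟩
  · intro b hb
    rcases Finset.mem_insert.1 hb with h | h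
    · exact h ▸ Finset.singleton_nonempty _
    · obtain ⟨c, hc, rfl⟩ := Finset.mem_image.1 h
      exact (hne c hc).map
  · intro b hb c hc hbc
    rcases Finset.mem_insert.1 hb with h | h <;> rcases Finset.mem_insert.1 hc with h' | h'
    · exact absurd (h.trans h'.symm) hbc
    · obtain ⟨c', -, rfl⟩ := Finset.mem_image.1 h'
      subst h
      exact Finset.disjoint_singleton_left.2 (last_not_mem_upF c')
    · obtain ⟨b', -, rfl⟩ := Finset.mem_image.1 h
      subst h'
      exact Finset.disjoint_singleton_right.2 (last_not_mem_upF b')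
    · obtain ⟨b', hb', rfl⟩ := Finset.mem_image.1 h
      obtain ⟨c', hc', rfl⟩ := Finset.mem_image.1 h'
      have : b' ≠ c' := fun e => hbc (by rw [e])
      simpa [upF, Finset.disjoint_map] using hdisj b' hb' c' hc' this
  · apply Finset.eq_univ_of_forall
    intro x
    rw [Finset.mem_sup]
    rcases Fin.eq_castSucc_or_eq_last x with ⟨y, rfl⟩ | rfl
    · have : y ∈ P.sup id := hsup ▸ Finset.mem_univ y
      obtain ⟨b, hb, hyb⟩ := Finset.mem_sup.1 this
      refine ⟨upF b, Finset.mem_insert_of_mem (Finset.mem_image_of_mem _ hb), ?_⟩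
      simpa [id] using mem_upF.2 hyb
    · exact ⟨{Fin.last k}, Finset.mem_insert_self _ _, Finset.mem_singleton_self _⟩

lemma up_mem_Tset {P : Finset (Finset (Fin k))} (hP : P ∈ Pset k) : up P ∈ Tset k :=
  ⟨up_isPartition hP, Finset.mem_insert_self _ _⟩

lemma bell_le_Tcard (k : ℕ) : bell k ≤ (Tset k).ncard := by
  rw [bell_eq]
  exact Set.ncard_le_ncard_of_injOn up (fun P hP => up_mem_Tset hP)
    (up_inj.injOn) (Set.toFinite _)

lemma Tcard_le_bell (k : ℕ) : (Tset k).ncard ≤ bell (k+1) := by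
  rw [bell_eq]
  exact Set.ncard_le_ncard (fun P hP => hP.1) (Set.toFinite _)

lemma bell_mono : Monotone bell := by
  apply monotone_nat_of_le_succ
  intro k
  exact (bell_le_Tcard k).trans (Tcard_le_bell k)

open Classical in
noncomputable def blkOf (P : Finset (Finset (Fin n))) (x : Fin n) : Finset (Fin n) :=
  Finset.univ.filter (fun y => ∃ b ∈ P, x ∈ b ∧ y ∈ b)

lemma blkOf_eq {P : Finset (Finset (Fin n))} (hP : IsSetPartition P) {b : Finset (Fin n)}
    (hb : b ∈ P) {x : Fin n} (hx : x ∈ b) : blkOf P x = b := by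
  classical
  ext y
  simp only [blkOf, Finset.mem_filter, Finset.mem_univ, true_and]
  constructor
  · rintro ⟨c, hc, hxc, hyc⟩
    exact (block_eq hP hb hc hx hxc) ▸ hyc
  · intro hy
    exact ⟨b, hb, hx, hy⟩

lemma blkOf_mem {P : Finset (Finset (Fin n))} (hP : IsSetPartition P) (x : Fin n) :
    blkOf P x ∈ P ∧ x ∈ blkOf P x := by
  obtain ⟨b, hb, hx⟩ := exists_block hP x
  rw [blkOf_eq hP hb hx]
  exact ⟨hb, hx⟩

open Classical in
noncomputable def sfToT (R : Finset (Finset (Fin (k+1)))) : Finset (Finset (Fin (k+1))) :=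
  insert {Fin.last k}
    ((R.erase (blkOf R (Fin.last k))) ∪
      ((blkOf R (Fin.last k)).erase (Fin.last k)).image (fun x => ({x} : Finset (Fin (k+1)))))

lemma mem_sfToT {R : Finset (Finset (Fin (k+1)))} {b : Finset (Fin (k+1))} :
    b ∈ sfToT R ↔ b = {Fin.last k} ∨ b ∈ R.erase (blkOf R (Fin.last k)) ∨
      ∃ x ∈ (blkOf R (Fin.last k)).erase (Fin.last k), b = {x} := by
  classical
  simp only [sfToT, Finset.mem_insert, Finset.mem_union, Finset.mem_image]
  constructor
  · rintro (h | h | ⟨x, hx, rfl⟩)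
    · exact Or.inl h
    · exact Or.inr (Or.inl h)
    · exact Or.inr (Or.inr ⟨x, hx, rfl⟩)
  · rintro (h | h | ⟨x, hx, rfl⟩)
    · exact Or.inl h
    · exact Or.inr (Or.inl h)
    · exact Or.inr (Or.inr ⟨x, hx, rfl⟩)

lemma singleton_mem_sfToT {R : Finset (Finset (Fin (k+1)))} (hR : R ∈ SFset (k+1)) (x : Fin (k+1)) :
    ({x} : Finset (Fin (k+1))) ∈ sfToT R ↔ x ∈ blkOf R (Fin.last k) := by
  obtain ⟨hP, h2⟩ := hR
  obtain ⟨hBmem, hBla⟩ := blkOf_mem hP (Fin.last k)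
  rw [mem_sfToT]
  constructor
  · rintro (h | h | ⟨y, hy, h⟩)
    · rw [Finset.singleton_inj] at h
      exact h ▸ hBla
    · have := h2 _ (Finset.mem_of_mem_erase h)
      simp at this
    · rw [Finset.singleton_inj] at h
      exact h ▸ Finset.mem_of_mem_erase hy
  · intro hx
    by_cases hxl : x = Fin.last k
    · exact Or.inl (by rw [hxl])
    · exact Or.inr (Or.inr ⟨x, Finset.mem_erase.2 ⟨hxl, hx⟩, rfl⟩)

lemma big_mem_sfToT {R : Finset (Finset (Fin (k+1)))} {b : Finset (Fin (k+1))}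
    (hb : 2 ≤ b.card) :
    b ∈ sfToT R ↔ b ∈ R ∧ b ≠ blkOf R (Fin.last k) := by
  rw [mem_sfToT]
  constructor
  · rintro (h | h | ⟨y, hy, rfl⟩)
    · rw [h] at hb; simp at hb
    · exact ⟨Finset.mem_of_mem_erase h, Finset.ne_of_mem_erase h⟩
    · simp at hb
  · intro ⟨h1, h2⟩
    exact Or.inr (Or.inl (Finset.mem_erase.2 ⟨h2, h1⟩))

lemma sfToT_mem_Tset {R : Finset (Finset (Fin (k+1)))} (hR : R ∈ SFset (k+1)) :
    sfToT R ∈ Tset k := by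
  obtain ⟨hP, h2⟩ := hR
  obtain ⟨hBmem, hBla⟩ := blkOf_mem hP (Fin.last k)
  set B := blkOf R (Fin.last k) with hBdef
  have hlast_not : ∀ c ∈ R.erase B, Fin.last k ∉ c := by
    intro c hc hlc
    exact (Finset.ne_of_mem_erase hc)
      (block_eq hP (Finset.mem_of_mem_erase hc) hBmem hlc hBla)
  have hB_not : ∀ c ∈ R.erase B, ∀ x ∈ B, x ∉ c := by
    intro c hc x hx hxc
    exact (Finset.ne_of_mem_erase hc)
      (block_eq hP (Finset.mem_of_mem_erase hc) hBmem hxc hx)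
  refine ⟨⟨?_, ?_, ?_⟩, Finset.mem_insert_self _ _⟩
  · intro b hb
    rcases mem_sfToT.1 hb with h | h | ⟨x, _, rfl⟩
    · exact h ▸ Finset.singleton_nonempty _
    · exact hP.1 _ (Finset.mem_of_mem_erase h)
    · exact Finset.singleton_nonempty _
  · intro b hb c hc hbc
    rcases mem_sfToT.1 hb with h | h | ⟨x, hx, rfl⟩ <;>
      rcases mem_sfToT.1 hc with h' | h' | ⟨x', hx', rfl⟩
    · exact absurd (h.trans h'.symm) hbc
    · subst h
      exact Finset.disjoint_singleton_left.2 (hlast_not _ h')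
    · subst h
      refine Finset.disjoint_singleton_left.2 ?_
      rw [Finset.mem_singleton]
      exact fun e => (Finset.mem_erase.1 hx').1 e.symm
    · subst h'
      exact Finset.disjoint_singleton_right.2 (hlast_not _ h)
    · exact hP.2.1 _ (Finset.mem_of_mem_erase h) _ (Finset.mem_of_mem_erase h') hbc
    · exact Finset.disjoint_singleton_right.2
        (hB_not _ h _ (Finset.mem_of_mem_erase hx'))
    · subst h'
      refine Finset.disjoint_singleton_right.2 ?_
      rw [Finset.mem_singleton]
      exact fun e => (Finset.mem_erase.1 hx).1 e.symm
    · exact Finset.disjoint_singleton_left.2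
        (hB_not _ h' _ (Finset.mem_of_mem_erase hx))
    · refine Finset.disjoint_singleton_left.2 ?_
      rw [Finset.mem_singleton]
      exact fun e => hbc (by rw [e])
  · apply Finset.eq_univ_of_forall
    intro y
    rw [Finset.mem_sup]
    by_cases hy : y = Fin.last k
    · exact ⟨{Fin.last k}, Finset.mem_insert_self _ _, by simp [hy]⟩
    · obtain ⟨hCmem, hCy⟩ := blkOf_mem hP y
      by_cases hCB : blkOf R y = B
      · refine ⟨{y}, ?_, Finset.mem_singleton_self _⟩
        rw [mem_sfToT]
        have hyB : y ∈ blkOf R (Fin.last k) := by rw [← hBdef, ← hCB]; exact hCy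
        exact Or.inr (Or.inr ⟨y, Finset.mem_erase.2 ⟨hy, hyB⟩, rfl⟩)
      · refine ⟨blkOf R y, ?_, hCy⟩
        rw [mem_sfToT]
        exact Or.inr (Or.inl (Finset.mem_erase.2 ⟨hCB, hCmem⟩))

lemma sfToT_injOn : Set.InjOn (sfToT (k := k)) (SFset (k+1)) := by
  intro R1 h1 R2 h2 heq
  have hB : blkOf R1 (Fin.last k) = blkOf R2 (Fin.last k) := by
    ext x
    rw [← singleton_mem_sfToT h1 x, ← singleton_mem_sfToT h2 x, heq]
  have key : ∀ (R S : Finset (Finset (Fin (k+1)))), R ∈ SFset (k+1) → S ∈ SFset (k+1) →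
      sfToT R = sfToT S → blkOf R (Fin.last k) = blkOf S (Fin.last k) → ∀ b ∈ R, b ∈ S := by
    intro R S hR hS he hBe b hb
    by_cases hbB : b = blkOf R (Fin.last k)
    · rw [hbB, hBe]
      exact (blkOf_mem hS.1 _).1
    · have h2b : 2 ≤ b.card := hR.2 b hb
      have : b ∈ sfToT R := (big_mem_sfToT h2b).2 ⟨hb, hbB⟩
      rw [he] at this
      exact ((big_mem_sfToT h2b).1 this).1
  apply Finset.Subset.antisymm
  · intro b hb; exact key R1 R2 h1 h2 heq hB b hb
  · intro b hb; exact key R2 R1 h2 h1 heq.symm hB.symm b hb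

lemma bellT_le_Tcard (k : ℕ) : bellT (k+1) ≤ (Tset k).ncard := by
  rw [bellT_eq]
  exact Set.ncard_le_ncard_of_injOn sfToT (fun R hR => sfToT_mem_Tset hR)
    sfToT_injOn (Set.toFinite _)

open Classical in
noncomputable def sing (P : Finset (Finset (Fin k))) : Finset (Fin k) :=
  Finset.univ.filter (fun x => ({x} : Finset (Fin k)) ∈ P)

lemma mem_sing {P : Finset (Finset (Fin k))} {x : Fin k} :
    x ∈ sing P ↔ ({x} : Finset (Fin k)) ∈ P := by
  classical
  simp [sing]

open Classical in
noncomputable def bigs (P : Finset (Finset (Fin k))) : Finset (Finset (Fin k)) :=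
  P.filter (fun b => 2 ≤ b.card)

lemma mem_bigs {P : Finset (Finset (Fin k))} {b : Finset (Fin k)} :
    b ∈ bigs P ↔ b ∈ P ∧ 2 ≤ b.card := by
  classical
  simp [bigs]

lemma block_cases {P : Finset (Finset (Fin k))} (hP : IsSetPartition P)
    {b : Finset (Fin k)} (hb : b ∈ P) : 2 ≤ b.card ∨ ∃ x ∈ sing P, b = {x} := by
  rcases Nat.lt_or_ge b.card 2 with h | h
  · right
    have h1 : b.card = 1 := by
      have := Finset.card_pos.2 (hP.1 b hb)
      omega
    obtain ⟨x, hx⟩ := Finset.card_eq_one.1 h1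
    exact ⟨x, mem_sing.2 (hx ▸ hb), hx⟩
  · exact Or.inl h

lemma sing_not_mem_big {P : Finset (Finset (Fin k))} (hP : IsSetPartition P)
    {x : Fin k} (hx : x ∈ sing P) {b : Finset (Fin k)} (hb : b ∈ bigs P) : x ∉ b := by
  intro hxb
  have h1 : ({x} : Finset (Fin k)) = b :=
    block_eq hP (mem_sing.1 hx) (mem_bigs.1 hb).1 (Finset.mem_singleton_self x) hxb
  have := (mem_bigs.1 hb).2
  rw [← h1] at this
  simp at this

lemma P_decomp {P : Finset (Finset (Fin k))} (hP : IsSetPartition P) :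
    P = bigs P ∪ (sing P).image (fun x => ({x} : Finset (Fin k))) := by
  classical
  ext b
  rw [Finset.mem_union, Finset.mem_image]
  constructor
  · intro hb
    rcases block_cases hP hb with h | ⟨x, hx, rfl⟩
    · exact Or.inl (mem_bigs.2 ⟨hb, h⟩)
    · exact Or.inr ⟨x, hx, rfl⟩
  · rintro (h | ⟨x, hx, rfl⟩)
    · exact (mem_bigs.1 h).1
    · exact mem_sing.1 hx

noncomputable def psi (P : Finset (Finset (Fin k))) : Finset (Finset (Fin (k+1))) :=
  insert (insert (Fin.last k) ((sing P).map Fin.castSuccEmb)) ((bigs P).image upF)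

lemma mem_special {P : Finset (Finset (Fin k))} {z : Fin (k+1)} :
    z ∈ insert (Fin.last k) ((sing P).map Fin.castSuccEmb) ↔
      z = Fin.last k ∨ ∃ x ∈ sing P, x.castSucc = z := by
  simp [Finset.mem_insert, Finset.mem_map]

lemma psi_mem_SF {P : Finset (Finset (Fin k))} (hP : P ∈ Pset k \ SFset k) :
    psi P ∈ SFset (k+1) := by
  obtain ⟨hPp, hPn⟩ := hP
  have hPp' : IsSetPartition P := hPp
  have hsing : (sing P).Nonempty := by
    by_contra h
    apply hPn
    refine ⟨hPp', fun b hb => ?_⟩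
    rcases block_cases hPp' hb with h2 | ⟨x, hx, rfl⟩
    · exact h2
    · exact absurd ⟨x, hx⟩ h
  obtain ⟨x₀, hx₀⟩ := hsing
  have hspec_big : 2 ≤ (insert (Fin.last k) ((sing P).map Fin.castSuccEmb)).card := by
    refine Finset.one_lt_card.2 ⟨Fin.last k, Finset.mem_insert_self _ _, x₀.castSucc, ?_, ?_⟩
    · exact mem_special.2 (Or.inr ⟨x₀, hx₀, rfl⟩)
    · exact fun e => (Fin.castSucc_lt_last x₀).ne e.symm
  have hdisj_spec : ∀ b ∈ bigs P,
      Disjoint (insert (Fin.last k) ((sing P).map Fin.castSuccEmb)) (upF b) := by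
    intro b hb
    rw [Finset.disjoint_left]
    intro z hz hzb
    rcases mem_special.1 hz with rfl | ⟨x, hx, rfl⟩
    · exact last_not_mem_upF b hzb
    · exact sing_not_mem_big hPp' hx hb (mem_upF.1 hzb)
  constructor
  · refine ⟨?_, ?_, ?_⟩
    · intro b hb
      rcases Finset.mem_insert.1 hb with rfl | h
      · exact Finset.insert_nonempty _ _
      · obtain ⟨c, hc, rfl⟩ := Finset.mem_image.1 h
        exact (hPp'.1 c (mem_bigs.1 hc).1).map
    · intro b hb c hc hbc
      rcases Finset.mem_insert.1 hb with rfl | h <;> rcases Finset.mem_insert.1 hc with h' | h'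
      · exact absurd h'.symm hbc
      · obtain ⟨c', hc', rfl⟩ := Finset.mem_image.1 h'
        exact hdisj_spec c' hc'
      · obtain ⟨b', hb', rfl⟩ := Finset.mem_image.1 h
        subst h'
        exact (hdisj_spec b' hb').symm
      · obtain ⟨b', hb', rfl⟩ := Finset.mem_image.1 h
        obtain ⟨c', hc', rfl⟩ := Finset.mem_image.1 h'
        have : b' ≠ c' := fun e => hbc (by rw [e])
        simpa [upF, Finset.disjoint_map] using
          hPp'.2.1 b' (mem_bigs.1 hb').1 c' (mem_bigs.1 hc').1 this
    · apply Finset.eq_univ_of_forall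
      intro y
      rw [Finset.mem_sup]
      rcases Fin.eq_castSucc_or_eq_last y with ⟨z, rfl⟩ | rfl
      · obtain ⟨b, hb, hzb⟩ := exists_block hPp' z
        rcases block_cases hPp' hb with h2 | ⟨x, hx, rfl⟩
        · refine ⟨upF b, Finset.mem_insert_of_mem
            (Finset.mem_image_of_mem _ (mem_bigs.2 ⟨hb, h2⟩)), ?_⟩
          simpa [id] using mem_upF.2 hzb
        · have : z = x := Finset.mem_singleton.1 hzb
          subst this
          refine ⟨_, Finset.mem_insert_self _ _, ?_⟩
          simpa [id] using mem_special.2 (Or.inr ⟨z, hx, rfl⟩)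
      · exact ⟨_, Finset.mem_insert_self _ _, Finset.mem_insert_self _ _⟩
  · intro b hb
    rcases Finset.mem_insert.1 hb with rfl | h
    · exact hspec_big
    · obtain ⟨c, hc, rfl⟩ := Finset.mem_image.1 h
      rw [card_upF]
      exact (mem_bigs.1 hc).2

lemma psi_injOn : Set.InjOn (psi (k := k)) (Pset k \ SFset k) := by
  intro P1 hP1 P2 hP2 heq
  have hlast_not_im : ∀ P : Finset (Finset (Fin k)),
      insert (Fin.last k) ((sing P).map Fin.castSuccEmb) ∉ (bigs P).image upF := by
    intro P h
    obtain ⟨c, -, hc⟩ := Finset.mem_image.1 h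
    exact last_not_mem_upF c (hc ▸ Finset.mem_insert_self _ _)
  have hspec : insert (Fin.last k) ((sing P1).map Fin.castSuccEmb) =
      insert (Fin.last k) ((sing P2).map Fin.castSuccEmb) := by
    have h1 : insert (Fin.last k) ((sing P1).map Fin.castSuccEmb) ∈ psi P2 := by
      rw [← heq]; exact Finset.mem_insert_self _ _
    rcases Finset.mem_insert.1 h1 with h | h
    · exact h
    · obtain ⟨c, -, hc⟩ := Finset.mem_image.1 h
      exact absurd (hc ▸ Finset.mem_insert_self _ _) (last_not_mem_upF c)
  have hnm : ∀ P : Finset (Finset (Fin k)),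
      Fin.last k ∉ (sing P).map Fin.castSuccEmb := by
    intro P h
    obtain ⟨x, -, hx⟩ := Finset.mem_map.1 h
    exact (Fin.castSucc_lt_last x).ne hx
  have hsing_eq : sing P1 = sing P2 := by
    apply Finset.map_injective Fin.castSuccEmb
    have h1 := congrArg (fun s => Finset.erase s (Fin.last k)) hspec
    simpa [Finset.erase_insert, hnm P1, hnm P2] using h1
  have himg : (bigs P1).image upF = (bigs P2).image upF := by
    have h1 := congrArg
      (fun s => Finset.erase s (insert (Fin.last k) ((sing P1).map Fin.castSuccEmb))) heq
    simp only [psi] at h1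
    rw [hspec] at h1
    rwa [Finset.erase_insert (hspec ▸ hlast_not_im P1),
      Finset.erase_insert (hlast_not_im P2)] at h1
  have hbigs : bigs P1 = bigs P2 := Finset.image_injective upF_inj himg
  rw [P_decomp hP1.1, P_decomp hP2.1, hbigs, hsing_eq]

lemma bell_le_bellT_add (k : ℕ) : bell k ≤ bellT k + bellT (k+1) := by
  have h0 : SFset k ⊆ Pset k := fun P hP => hP.1
  have h2 := Set.ncard_diff_add_ncard_of_subset h0 (Set.toFinite _)
  have h1 : (Pset k \ SFset k).ncard ≤ bellT (k+1) := by
    rw [bellT_eq]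
    exact Set.ncard_le_ncard_of_injOn psi (fun P hP => psi_mem_SF hP) psi_injOn (Set.toFinite _)
  rw [bell_eq, bellT_eq]
  omega

noncomputable def phi (P : Finset (Finset (Fin (k+1)))) (b : Finset (Fin (k+1))) :
    Finset (Finset (Fin (k+1))) :=
  insert (insert (Fin.last k) b) ((P.erase {Fin.last k}).erase b)

section Phi
variable {P : Finset (Finset (Fin (k+1)))} {b : Finset (Fin (k+1))}

lemma last_not_mem_of_ne {c : Finset (Fin (k+1))} (hT : P ∈ Tset k) (hc : c ∈ P)
    (hcne : c ≠ {Fin.last k}) : Fin.last k ∉ c := fun hl =>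
  hcne (block_eq hT.1 hc hT.2 hl (Finset.mem_singleton_self _))

lemma phi_mem (hT : P ∈ Tset k) (hb : b ∈ P) (hbne : b ≠ {Fin.last k}) :
    phi P b ∈ Pset (k+1) \ Tset k := by
  obtain ⟨hP, hl⟩ := hT
  have hlb : Fin.last k ∉ b := last_not_mem_of_ne ⟨hP, hl⟩ hb hbne
  have hmem_erase : ∀ c ∈ (P.erase {Fin.last k}).erase b,
      c ∈ P ∧ c ≠ b ∧ Fin.last k ∉ c := by
    intro c hc
    have h1 := Finset.mem_of_mem_erase hc
    refine ⟨Finset.mem_of_mem_erase h1, Finset.ne_of_mem_erase hc, ?_⟩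
    exact last_not_mem_of_ne ⟨hP, hl⟩ (Finset.mem_of_mem_erase h1) (Finset.ne_of_mem_erase h1)
  constructor
  · refine ⟨?_, ?_, ?_⟩
    · intro c hc
      rcases Finset.mem_insert.1 hc with rfl | h
      · exact Finset.insert_nonempty _ _
      · exact hP.1 c (hmem_erase c h).1
    · intro c hc d hd hcd
      rcases Finset.mem_insert.1 hc with rfl | h <;> rcases Finset.mem_insert.1 hd with h' | h'
      · exact absurd h'.symm hcd
      · obtain ⟨hdP, hdb, hdl⟩ := hmem_erase d h'
        rw [Finset.disjoint_left]
        intro z hz hzd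
        rcases Finset.mem_insert.1 hz with rfl | hz'
        · exact hdl hzd
        · exact (hP.2.1 b hb d hdP (Ne.symm hdb)).forall_ne_finset hz' hzd rfl
      · subst h'
        obtain ⟨hcP, hcb, hcl⟩ := hmem_erase c h
        rw [Finset.disjoint_right]
        intro z hz hzc
        rcases Finset.mem_insert.1 hz with rfl | hz'
        · exact hcl hzc
        · exact (hP.2.1 b hb c hcP (Ne.symm hcb)).forall_ne_finset hz' hzc rfl
      · exact hP.2.1 c (hmem_erase c h).1 d (hmem_erase d h').1 hcd
    · apply Finset.eq_univ_of_forall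
      intro y
      rw [Finset.mem_sup]
      by_cases hy : y = Fin.last k
      · exact ⟨_, Finset.mem_insert_self _ _, by simp [hy]⟩
      · obtain ⟨hCmem, hCy⟩ := blkOf_mem hP y
        have hCne : blkOf P y ≠ {Fin.last k} := by
          intro e
          rw [e] at hCy
          exact hy (Finset.mem_singleton.1 hCy)
        by_cases hCb : blkOf P y = b
        · exact ⟨_, Finset.mem_insert_self _ _,
            Finset.mem_insert_of_mem (hCb ▸ hCy)⟩
        · refine ⟨blkOf P y, Finset.mem_insert_of_mem ?_, hCy⟩
          exact Finset.mem_erase.2 ⟨hCb, Finset.mem_erase.2 ⟨hCne, hCmem⟩⟩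
  · intro hTm
    have : ({Fin.last k} : Finset (Fin (k+1))) ∈ phi P b := hTm.2
    rcases Finset.mem_insert.1 this with h | h
    · have h2 : 2 ≤ (insert (Fin.last k) b).card := by
        have hbne' : b.Nonempty := hP.1 b hb
        have := Finset.card_insert_of_notMem hlb
        have := Finset.card_pos.2 hbne'
        omega
      rw [← h] at h2
      simp at h2
    · exact (hmem_erase _ h).2.2 (Finset.mem_singleton_self _)

lemma phi_inj {P1 P2 : Finset (Finset (Fin (k+1)))} {b1 b2 : Finset (Fin (k+1))}
    (h1 : P1 ∈ Tset k) (hb1 : b1 ∈ P1) (hne1 : b1 ≠ {Fin.last k})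
    (h2 : P2 ∈ Tset k) (hb2 : b2 ∈ P2) (hne2 : b2 ≠ {Fin.last k})
    (heq : phi P1 b1 = phi P2 b2) : P1 = P2 ∧ b1 = b2 := by
  have hlb1 : Fin.last k ∉ b1 := last_not_mem_of_ne h1 hb1 hne1
  have hlb2 : Fin.last k ∉ b2 := last_not_mem_of_ne h2 hb2 hne2
  have hkey : ∀ (P : Finset (Finset (Fin (k+1)))) (b : Finset (Fin (k+1))), P ∈ Tset k →
      ∀ c ∈ (P.erase {Fin.last k}).erase b, Fin.last k ∉ c := by
    intro P b hT c hc
    have h1' := Finset.mem_of_mem_erase hc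
    exact last_not_mem_of_ne hT (Finset.mem_of_mem_erase h1') (Finset.ne_of_mem_erase h1')
  have hbb : insert (Fin.last k) b1 = insert (Fin.last k) b2 := by
    have hmem : insert (Fin.last k) b1 ∈ phi P2 b2 := heq ▸ Finset.mem_insert_self _ _
    rcases Finset.mem_insert.1 hmem with h | h
    · exact h
    · exact absurd (Finset.mem_insert_self _ _) (hkey P2 b2 h2 _ h)
  have hb12 : b1 = b2 := by
    have := congrArg (fun s => Finset.erase s (Fin.last k)) hbb
    simpa [Finset.erase_insert, hlb1, hlb2] using this
  subst hb12
  refine ⟨?_, rfl⟩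
  have hE : (P1.erase {Fin.last k}).erase b1 = (P2.erase {Fin.last k}).erase b1 := by
    have hnm : ∀ (P : Finset (Finset (Fin (k+1)))), P ∈ Tset k →
        insert (Fin.last k) b1 ∉ (P.erase {Fin.last k}).erase b1 := by
      intro P hT h
      exact hkey P b1 hT _ h (Finset.mem_insert_self _ _)
    have := congrArg (fun s => Finset.erase s (insert (Fin.last k) b1)) heq
    simp only [phi] at this
    rwa [Finset.erase_insert (hnm P1 h1), Finset.erase_insert (hnm P2 h2)] at this
  have hrec : ∀ (P : Finset (Finset (Fin (k+1)))), P ∈ Tset k → b1 ∈ P → b1 ≠ {Fin.last k} →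
      P = insert {Fin.last k} (insert b1 ((P.erase {Fin.last k}).erase b1)) := by
    intro P hT hb hne
    rw [Finset.insert_erase (Finset.mem_erase.2 ⟨hne, hb⟩), Finset.insert_erase hT.2]
  rw [hrec P1 h1 hb1 hne1, hrec P2 h2 hb2 hne2, hE]

end Phi

def Tmany (k C : ℕ) : Set (Finset (Finset (Fin (k+1)))) :=
  {P | P ∈ Tset k ∧ C + 1 ≤ P.card}

def Tfew (k C : ℕ) : Set (Finset (Finset (Fin (k+1)))) :=
  {P | P ∈ Tset k ∧ P.card ≤ C}

lemma count_many (k C : ℕ) :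
    C * (Tmany k C).ncard ≤ (Pset (k+1) \ Tset k).ncard := by
  classical
  set F := (Set.toFinite (Tmany k C)).toFinset with hF
  set G := (Set.toFinite (Pset (k+1) \ Tset k)).toFinset with hG
  set D : Finset ((Finset (Finset (Fin (k+1)))) × Finset (Fin (k+1))) :=
    F.biUnion (fun P => (P.erase {Fin.last k}).image (fun b => (P, b))) with hD
  have hmemD : ∀ pb : (Finset (Finset (Fin (k+1)))) × Finset (Fin (k+1)),
      pb ∈ D → pb.1 ∈ Tmany k C ∧ pb.2 ∈ pb.1 ∧ pb.2 ≠ {Fin.last k} := by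
    intro pb hpb
    obtain ⟨P, hP, him⟩ := Finset.mem_biUnion.1 hpb
    obtain ⟨b, hb, hbe⟩ := Finset.mem_image.1 him
    have hP' : P ∈ Tmany k C := (Set.Finite.mem_toFinset _).1 hP
    cases hbe
    exact ⟨hP', Finset.mem_of_mem_erase hb, Finset.ne_of_mem_erase hb⟩
  have hcard : C * F.card ≤ D.card := by
    rw [hD, Finset.card_biUnion]
    · calc C * F.card = ∑ _P ∈ F, C := by
            rw [Finset.sum_const, smul_eq_mul, mul_comm]
        _ ≤ _ := by
            apply Finset.sum_le_sum
            intro P hP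
            rw [Finset.card_image_of_injective _
              (fun b1 b2 h => by simpa using congrArg Prod.snd h)]
            have hP' : P ∈ Tmany k C := (Set.Finite.mem_toFinset _).1 hP
            have hlP : ({Fin.last k} : Finset (Fin (k+1))) ∈ P := hP'.1.2
            rw [Finset.card_erase_of_mem hlP]
            have := hP'.2
            omega
    · intro P hP Q hQ hPQ
      rw [Function.onFun, Finset.disjoint_left]
      intro pb hpb hpb'
      obtain ⟨b, -, hbe⟩ := Finset.mem_image.1 hpb
      obtain ⟨c, -, hce⟩ := Finset.mem_image.1 hpb'
      apply hPQ
      rw [← hbe] at hce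
      exact (congrArg Prod.fst hce).symm
  have hinj : D.card ≤ G.card := by
    apply Finset.card_le_card_of_injOn (fun pb => phi pb.1 pb.2)
    · intro pb hpb
      obtain ⟨hT, hb, hne⟩ := hmemD pb hpb
      rw [hG, Finset.mem_coe, Set.Finite.mem_toFinset]
      exact phi_mem hT.1 hb hne
    · intro pb hpb qb hqb he
      obtain ⟨hT1, hb1, hne1⟩ := hmemD pb (by simpa using hpb)
      obtain ⟨hT2, hb2, hne2⟩ := hmemD qb (by simpa using hqb)
      obtain ⟨e1, e2⟩ := phi_inj hT1.1 hb1 hne1 hT2.1 hb2 hne2 he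
      exact Prod.ext e1 e2
  rw [Set.ncard_eq_toFinset_card _ (Set.toFinite _), Set.ncard_eq_toFinset_card _ (Set.toFinite _)]
  exact le_trans hcard hinj

open Classical in
noncomputable def fidx (P : Finset (Finset (Fin n))) (x : Fin n) : ℕ :=
  (P.filter (fun b => b.min < (blkOf P x).min)).card

lemma min_inj_on_blocks {P : Finset (Finset (Fin n))} (hP : IsSetPartition P)
    {b c : Finset (Fin n)} (hb : b ∈ P) (hc : c ∈ P) (h : b.min = c.min) : b = c := by
  have hbne : b.Nonempty := hP.1 b hb
  have hcne : c.Nonempty := hP.1 c hc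
  have h1 : b.min' hbne = c.min' hcne := by
    have hb' := Finset.coe_min' hbne
    have hc' := Finset.coe_min' hcne
    rw [← hb', ← hc'] at h
    exact_mod_cast h
  exact block_eq hP hb hc (h1 ▸ Finset.min'_mem b hbne) (Finset.min'_mem c hcne)

lemma fidx_eq_imp {P : Finset (Finset (Fin n))} (hP : IsSetPartition P) {x y : Fin n}
    (h : fidx P x = fidx P y) : blkOf P x = blkOf P y := by
  classical
  by_contra hne
  have hbx := (blkOf_mem hP x).1
  have hby := (blkOf_mem hP y).1
  have hmin : (blkOf P x).min ≠ (blkOf P y).min :=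
    fun e => hne (min_inj_on_blocks hP hbx hby e)
  have key : ∀ u v : Fin n, (blkOf P u).min < (blkOf P v).min → fidx P u < fidx P v := by
    intro u v huv
    apply Finset.card_lt_card
    rw [Finset.ssubset_iff_of_subset]
    · exact ⟨blkOf P u, Finset.mem_filter.2 ⟨(blkOf_mem hP u).1, huv⟩,
        fun hmem => absurd (Finset.mem_filter.1 hmem).2 (lt_irrefl _)⟩
    · intro c hc
      have := Finset.mem_filter.1 hc
      exact Finset.mem_filter.2 ⟨this.1, this.2.trans huv⟩
  rcases lt_or_gt_of_ne hmin with hlt | hgt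
  · exact absurd h (Nat.ne_of_lt (key x y hlt))
  · exact absurd h.symm (Nat.ne_of_lt (key y x hgt))

lemma blk_eq_fidx_fiber {P : Finset (Finset (Fin n))} (hP : IsSetPartition P) (x : Fin n) :
    blkOf P x = Finset.univ.filter (fun y => fidx P y = fidx P x) := by
  classical
  ext y
  simp only [Finset.mem_filter, Finset.mem_univ, true_and]
  constructor
  · intro hy
    have : blkOf P y = blkOf P x :=
      block_eq hP (blkOf_mem hP y).1 (blkOf_mem hP x).1 (blkOf_mem hP y).2 hy
    simp [fidx, this]
  · intro hy
    have := fidx_eq_imp hP hy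
    rw [← this]
    exact (blkOf_mem hP y).2

lemma Tfew_le_pow (k C : ℕ) (hC : 0 < C) : (Tfew k C).ncard ≤ C ^ (k+1) := by
  classical
  have target : (Set.univ : Set (Fin (k+1) → Fin C)).ncard = C ^ (k+1) := by
    rw [Set.ncard_univ, Nat.card_eq_fintype_card, Fintype.card_fun]
    simp
  rw [← target]
  refine Set.ncard_le_ncard_of_injOn
    (fun P x => (⟨fidx P x % C, Nat.mod_lt _ hC⟩ : Fin C))
    (fun P _ => Set.mem_univ _) ?_ (Set.toFinite _)
  intro P hP Q hQ he
  have hfidx_lt : ∀ (R : Finset (Finset (Fin (k+1)))), R ∈ Tfew k C →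
      ∀ x, fidx R x < C := by
    intro R hR x
    have hRP : IsSetPartition R := hR.1.1
    have hsub : R.filter (fun b => b.min < (blkOf R x).min) ⊆ R.erase (blkOf R x) := by
      intro c hc
      obtain ⟨hcR, hcm⟩ := Finset.mem_filter.1 hc
      refine Finset.mem_erase.2 ⟨fun e => ?_, hcR⟩
      rw [e] at hcm
      exact lt_irrefl _ hcm
    have h1 := Finset.card_le_card hsub
    rw [Finset.card_erase_of_mem (blkOf_mem hRP x).1] at h1
    have h2 : 0 < R.card := Finset.card_pos.2 ⟨_, hR.1.2⟩
    have h3 := hR.2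
    unfold fidx
    omega
  have hfe : ∀ x, fidx P x = fidx Q x := by
    intro x
    have := congrFun he x
    have h1 : fidx P x % C = fidx Q x % C := by
      simpa using congrArg Fin.val this
    rwa [Nat.mod_eq_of_lt (hfidx_lt P hP x), Nat.mod_eq_of_lt (hfidx_lt Q hQ x)] at h1
  have hsub : ∀ (R S : Finset (Finset (Fin (k+1)))), R ∈ Tfew k C → S ∈ Tfew k C →
      (∀ x, fidx R x = fidx S x) → R ⊆ S := by
    intro R S hR hS hf b hb
    obtain ⟨x, hx⟩ := hR.1.1.1 b hb
    have hbx : b = blkOf R x := (blkOf_eq hR.1.1 hb hx).symm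
    have : b = blkOf S x := by
      rw [hbx, blk_eq_fidx_fiber hR.1.1 x, blk_eq_fidx_fiber hS.1.1 x]
      ext y
      simp [hf y, hf x]
    rw [this]
    exact (blkOf_mem hS.1.1 x).1
  exact Finset.Subset.antisymm (hsub P Q hP hQ hfe) (hsub Q P hQ hP (fun x => (hfe x).symm))

def mblock (j : ℕ) (σ : Equiv.Perm (Fin j)) (i : Fin j) : Finset (Fin (j+j)) :=
  {Fin.castAdd j i, Fin.natAdd j (σ i)}

lemma castAdd_ne_natAdd {j : ℕ} (a b : Fin j) : Fin.castAdd j a ≠ Fin.natAdd j b := by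
  intro h
  have := congrArg Fin.val h
  simp only [Fin.coe_castAdd, Fin.coe_natAdd] at this
  omega

lemma mem_mblock {j : ℕ} {σ : Equiv.Perm (Fin j)} {i : Fin j} {z : Fin (j+j)} :
    z ∈ mblock j σ i ↔ z = Fin.castAdd j i ∨ z = Fin.natAdd j (σ i) := by
  simp [mblock]

def mpart (j : ℕ) (σ : Equiv.Perm (Fin j)) : Finset (Finset (Fin (j+j))) :=
  Finset.univ.image (mblock j σ)

lemma mblock_inj {j : ℕ} {σ : Equiv.Perm (Fin j)} {i i' : Fin j}
    (h : ¬ Disjoint (mblock j σ i) (mblock j σ i')) : i = i' := by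
  rw [Finset.not_disjoint_iff] at h
  obtain ⟨z, hz, hz'⟩ := h
  rcases mem_mblock.1 hz with rfl | rfl <;> rcases mem_mblock.1 hz' with h' | h'
  · exact Fin.castAdd_injective _ _ h'
  · exact absurd h' (castAdd_ne_natAdd _ _)
  · exact absurd h'.symm (castAdd_ne_natAdd _ _)
  · exact σ.injective ((Fin.natAddEmb j).injective h')

lemma mpart_isPartition (j : ℕ) (σ : Equiv.Perm (Fin j)) : IsSetPartition (mpart j σ) := by
  refine ⟨?_, ?_, ?_⟩
  · intro b hb
    obtain ⟨i, -, rfl⟩ := Finset.mem_image.1 hb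
    exact ⟨_, mem_mblock.2 (Or.inl rfl)⟩
  · intro b hb c hc hbc
    obtain ⟨i, -, rfl⟩ := Finset.mem_image.1 hb
    obtain ⟨i', -, rfl⟩ := Finset.mem_image.1 hc
    by_contra hnd
    exact hbc (by rw [mblock_inj hnd])
  · apply Finset.eq_univ_of_forall
    intro y
    rw [Finset.mem_sup]
    refine Fin.addCases ?_ ?_ y
    · intro i
      exact ⟨mblock j σ i, Finset.mem_image_of_mem _ (Finset.mem_univ i),
        mem_mblock.2 (Or.inl rfl)⟩
    · intro x
      refine ⟨mblock j σ (σ.symm x), Finset.mem_image_of_mem _ (Finset.mem_univ _), ?_⟩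
      refine mem_mblock.2 (Or.inr ?_)
      rw [Equiv.apply_symm_apply]

lemma mpart_inj (j : ℕ) : Function.Injective (mpart j) := by
  intro σ σ' h
  apply Equiv.ext
  intro i
  have h1 : mblock j σ i ∈ mpart j σ' :=
    h ▸ Finset.mem_image_of_mem _ (Finset.mem_univ i)
  obtain ⟨i', -, hi'⟩ := Finset.mem_image.1 h1
  have hc : Fin.castAdd j i ∈ mblock j σ' i' := hi' ▸ mem_mblock.2 (Or.inl rfl)
  have hii' : i' = i := by
    rcases mem_mblock.1 hc with h' | h'
    · exact (Fin.castAdd_injective _ _ h').symm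
    · exact absurd h' (castAdd_ne_natAdd _ _)
  rw [hii'] at hi'
  have hn : Fin.natAdd j (σ i) ∈ mblock j σ' i := hi' ▸ mem_mblock.2 (Or.inr rfl)
  rcases mem_mblock.1 hn with h' | h'
  · exact absurd h'.symm (castAdd_ne_natAdd _ _)
  · exact (Fin.natAddEmb j).injective h'

lemma fact_le_bell (j : ℕ) : j.factorial ≤ bell (j + j) := by
  have h1 : (Set.univ : Set (Equiv.Perm (Fin j))).ncard = j.factorial := by
    rw [Set.ncard_univ, Nat.card_eq_fintype_card, Fintype.card_perm, Fintype.card_fin]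
  rw [bell_eq, ← h1]
  exact Set.ncard_le_ncard_of_injOn (mpart j) (fun σ _ => mpart_isPartition j σ)
    ((mpart_inj j).injOn) (Set.toFinite _)

lemma key (t : ℕ) (ht : 0 < t) : ∃ M, ∀ k ≥ M, t * bell k < bellT (k+2) := by
  set C := 2 * t with hCdef
  have hC : 0 < C := by omega
  obtain ⟨M₀, hM₀⟩ := (Nat.eventually_mul_pow_lt_factorial_sub (2 * C^2) (C^2) 0
    ).exists_forall_of_atTop
  refine ⟨2 * M₀ + 2, fun k hk => ?_⟩
  set j := k / 2 with hjdef
  have hj2 : j + j ≤ k ∧ k + 1 ≤ 2 * j + 2 ∧ M₀ ≤ j := by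
    have h1 := Nat.div_add_mod k 2
    have h2 : k % 2 < 2 := Nat.mod_lt _ (by norm_num)
    omega
  have h7 : 2 * C ^ (k+1) < bell k := by
    have ha : 2 * C ^ (k+1) ≤ 2 * C^2 * (C^2) ^ j := by
      have h' : (C^2)^j = C^(2*j) := by rw [← pow_mul]
      have hle : k + 1 ≤ 2 + 2 * j := by omega
      calc 2 * C ^ (k+1) ≤ 2 * C ^ (2 + 2 * j) :=
            Nat.mul_le_mul_left _ (Nat.pow_le_pow_right hC hle)
        _ = 2 * C^2 * (C^2) ^ j := by rw [h', pow_add]; ring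
    have hb : 2 * C^2 * (C^2) ^ j < j.factorial := by
      have := hM₀ j hj2.2.2
      simpa using this
    calc 2 * C ^ (k+1) ≤ 2 * C^2 * (C^2) ^ j := ha
      _ < j.factorial := hb
      _ ≤ bell (j + j) := fact_le_bell j
      _ ≤ bell k := bell_mono hj2.1
  have h1 : bell k ≤ (Tset k).ncard := bell_le_Tcard k
  have h2 : (Tset k).ncard + C * (Tmany k C).ncard ≤ bell (k+1) := by
    have ha : Tset k ⊆ Pset (k+1) := fun P hP => hP.1
    have hb := Set.ncard_diff_add_ncard_of_subset ha (Set.toFinite _)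
    have hc := count_many k C
    rw [bell_eq]
    omega
  have h3 : bell (k+1) ≤ bellT (k+1) + bellT (k+2) := bell_le_bellT_add (k+1)
  have h4 : bellT (k+1) ≤ (Tset k).ncard := bellT_le_Tcard k
  have h5 : (Tset k).ncard ≤ (Tmany k C).ncard + (Tfew k C).ncard := by
    have : Tset k ⊆ Tmany k C ∪ Tfew k C := by
      intro P hP
      rcases le_or_gt P.card C with h | h
      · exact Or.inr ⟨hP, h⟩
      · exact Or.inl ⟨hP, h⟩
    calc (Tset k).ncard ≤ (Tmany k C ∪ Tfew k C).ncard :=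
          Set.ncard_le_ncard this (Set.toFinite _)
      _ ≤ _ := Set.ncard_union_le _ _
  have h6 : (Tfew k C).ncard ≤ C ^ (k+1) := Tfew_le_pow k C hC
  have hTm_pos : (Tset k).ncard < 2 * (Tmany k C).ncard := by omega
  have hCTm : C * (Tmany k C).ncard ≤ bellT (k+2) := by omega
  calc t * bell k ≤ t * (Tset k).ncard := Nat.mul_le_mul_left t h1
    _ < t * (2 * (Tmany k C).ncard) := mul_lt_mul_of_pos_left hTm_pos ht
    _ = C * (Tmany k C).ncard := by ring
    _ ≤ bellT (k+2) := hCTm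

end SPaux

theorem mul_bell_lt_bellT (t : ℕ) (ht : 0 < t) :
    ∃ N : ℕ, ∀ n ≥ N, ∀ r : ℕ, t + 4 ≤ r → r ≤ n - 2 →
      t * bell (n - r + 1) < bellT (n - t - 1) := by
  obtain ⟨M, hM⟩ := SPaux.key t ht
  refine ⟨M + t + 10, fun n hn r hr1 hr2 => ?_⟩
  set k := n - t - 3 with hk
  have hkM : M ≤ k := by omega
  have ha : n - r + 1 ≤ k := by omega
  have hb : n - t - 1 = k + 2 := by omega
  calc t * bell (n - r + 1) ≤ t * bell k :=
        Nat.mul_le_mul_left t (SPaux.bell_mono ha)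
    _ < bellT (k + 2) := hM k hkM
    _ = bellT (n - t - 1) := by rw [hb]
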